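/- Let 2 ≤ r < n be integers, let (s₂, …, s_r) be positive integers, and for 1 ≤ k ≤ n−r+1 set c_k = Σ_{k < k₂ < ⋯ < k_r ≤ n} 1/(k₂^{s₂} ⋯ k_r^{s_r}). Let p be the largest prime with p ≤ n−r+1, and set M = max( ν_p(c_p), ν_p(c_p) − min_{1≤k≤n−r+1, k≠p} ν_p(c_k) ). Then for every positive integer s₁ > M, the p-adic valuation of H_n(s₁, …, s_r) equals ν_p(c_p) − s₁ and is negative; in particular H_n(s₁, …, s_r) is not an integer. -/

import Mathlib

/-- The multiple harmonic sum
`H_n(s₁, …, s_r) = ∑_{1 ≤ k₁ < ⋯ < k_r ≤ n} 1/(k₁^{s₁} ⋯ k_r^{s_r})`. -/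
def mhs (n r : ℕ) (s : Fin r → ℕ) : ℚ :=
  ∑ k ∈ Finset.univ.filter (fun k : Fin r → Fin n => ∀ i j : Fin r, i < j → k i < k j),
    ∏ i, (1 : ℚ) / ((k i : ℕ) + 1 : ℚ) ^ s i

/-- `c_k = ∑_{k < k₂ < ⋯ < k_r ≤ n} 1/(k₂^{s₂} ⋯ k_r^{s_r})`, the inner sum of the
multiple harmonic sum, where the tail `(k₂,…,k_r)` has `r` entries with exponents `s'`. -/
def cval (n r : ℕ) (s' : Fin r → ℕ) (k : ℕ) : ℚ :=
  ∑ kk ∈ Finset.univ.filter (fun kk : Fin r → Fin n =>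
      (∀ i j : Fin r, i < j → kk i < kk j) ∧ ∀ i, k ≤ (kk i : ℕ)),
    ∏ i, (1 : ℚ) / ((kk i : ℕ) + 1 : ℚ) ^ s' i

lemma term_pos (n r : ℕ) (s' : Fin r → ℕ) (kk : Fin r → Fin n) :
    0 < ∏ i, (1 : ℚ) / ((kk i : ℕ) + 1 : ℚ) ^ s' i := by
  apply Finset.prod_pos
  intro i _
  positivity

lemma cval_pos (n r : ℕ) (s' : Fin r → ℕ) (m : ℕ) (h : m + r ≤ n) (hr : 1 ≤ r) :
    0 < cval n r s' m := by
  apply Finset.sum_pos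
  · intro kk _; exact term_pos n r s' kk
  · refine ⟨fun i => ⟨m + (i : ℕ), by omega⟩, ?_⟩
    simp only [Finset.mem_filter, Finset.mem_univ, true_and]
    constructor
    · intro i j hij
      simp only [Fin.lt_def]
      exact Nat.add_lt_add_left hij m
    · intro i; simp

lemma cval_eq_zero (n r : ℕ) (s' : Fin r → ℕ) (m : ℕ) (hr : 1 ≤ r) (h : n < m + r) :
    cval n r s' m = 0 := by
  rw [cval]
  apply Finset.sum_eq_zero
  intro kk hkk
  exfalso
  simp only [Finset.mem_filter, Finset.mem_univ, true_and] at hkk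
  obtain ⟨hmono, hbd⟩ := hkk
  have hsm : StrictMono kk := fun i j hij => hmono i j hij
  have hinj : Function.Injective kk := hsm.injective
  have hmaps : ∀ i ∈ (Finset.univ : Finset (Fin r)), kk i ∈
      Finset.univ.filter (fun x : Fin n => m ≤ (x : ℕ)) := by
    intro i _
    simp only [Finset.mem_filter, Finset.mem_univ, true_and]
    exact hbd i
  have hcard := Finset.card_le_card_of_injOn kk hmaps (fun a _ b _ hab => hinj hab)
  rw [Finset.card_univ, Fintype.card_fin] at hcard
  have h1 : (Finset.univ.filter (fun x : Fin n => m ≤ (x : ℕ))).card ≤ n - m := by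
    by_cases hm : m < n
    · have : Finset.univ.filter (fun x : Fin n => m ≤ (x : ℕ)) = Finset.Ici (⟨m, hm⟩ : Fin n) := by
        ext x
        simp [Finset.mem_Ici, Fin.le_def]
      rw [this, Fin.card_Ici]
    · have : Finset.univ.filter (fun x : Fin n => m ≤ (x : ℕ)) = ∅ := by
        ext x
        simp only [Finset.mem_filter, Finset.mem_univ, true_and, Finset.notMem_empty, iff_false]
        omega
      simp [this]
  omega

lemma mhs_decomp (n r : ℕ) (s₁ : ℕ) (s' : Fin r → ℕ) :
    mhs n (r + 1) (Fin.cons s₁ s') =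
      ∑ k : Fin n, ((1 : ℚ) / ((k : ℕ) + 1 : ℚ) ^ s₁) * cval n r s' ((k : ℕ) + 1) := by
  rw [mhs]
  rw [← Finset.sum_fiberwise_of_maps_to (g := fun kk : Fin (r+1) → Fin n => kk 0)
    (fun kk _ => Finset.mem_univ _)]
  apply Finset.sum_congr rfl
  intro k _
  rw [cval, Finset.mul_sum]
  refine Finset.sum_nbij' (i := fun kk => Fin.tail kk) (j := fun t => Fin.cons k t) ?_ ?_ ?_ ?_ ?_
  · intro kk hkk
    simp only [Finset.mem_filter, Finset.mem_univ, true_and] at hkk ⊢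
    obtain ⟨hmono, h0⟩ := hkk
    refine ⟨fun i j hij => hmono i.succ j.succ (by simpa using hij), fun i => ?_⟩
    have : kk 0 < kk i.succ := hmono 0 i.succ (Fin.succ_pos i)
    rw [h0] at this
    exact this
  · intro t ht
    simp only [Finset.mem_filter, Finset.mem_univ, true_and] at ht ⊢
    obtain ⟨hmono, hbd⟩ := ht
    refine ⟨?_, Fin.cons_zero _ _⟩
    intro i j hij
    induction j using Fin.cases with
    | zero => exact absurd (Fin.lt_def.mp hij) (by simp)
    | succ j =>
      induction i using Fin.cases with
      | zero =>
        simp only [Fin.cons_zero, Fin.cons_succ]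
        exact Fin.lt_def.mpr (hbd j)
      | succ i =>
        simp only [Fin.cons_succ]
        exact hmono i j (by simpa using hij)
  · intro kk hkk
    simp only [Finset.mem_filter] at hkk
    rw [← hkk.2]
    exact Fin.cons_self_tail kk
  · intro t _
    simp [Fin.tail_cons]
  · intro kk hkk
    simp only [Finset.mem_filter] at hkk
    rw [Fin.prod_univ_succ, hkk.2]
    simp [Fin.tail]

lemma lt_padicValRat_sum {p : ℕ} [hp : Fact p.Prime] {F : ℕ → ℚ} {S : Finset ℕ}
    (hS : S.Nonempty) (q : ℚ) (hF : ∀ i ∈ S, padicValRat p q < padicValRat p (F i))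
    (hpos : ∀ i ∈ S, 0 < F i) : padicValRat p q < padicValRat p (∑ i ∈ S, F i) := by
  induction hS using Finset.Nonempty.cons_induction with
  | singleton k => rw [Finset.sum_singleton]; exact hF k (by simp)
  | cons k S' hk hS' ih =>
    rw [Finset.sum_cons]
    refine padicValRat.lt_add_of_lt ?_ (hF k (by simp)) ?_
    · exact ne_of_gt (add_pos (hpos k (by simp))
        (Finset.sum_pos (fun i hi => hpos i (Finset.mem_cons_of_mem hi)) hS'))
    · exact ih (fun i hi => hF i (Finset.mem_cons_of_mem hi))
        (fun i hi => hpos i (Finset.mem_cons_of_mem hi))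

/-- Let the full length be `r + 1` with `2 ≤ r + 1 < n`, let `p` be the largest prime
`≤ n − (r+1) + 1 = n − r`, and let
`M = max(ν_p(c_p), ν_p(c_p) − min_{1 ≤ k ≤ n−r, k ≠ p} ν_p(c_k))`.
Then for every positive integer `s₁ > M`, `ν_p(H_n(s₁,…)) = ν_p(c_p) − s₁ < 0`;
in particular `H_n(s₁, s₂, …)` is not an integer. -/
theorem padicValRat_mhs_of_large_first_exponent (r n p : ℕ) (hr : 1 ≤ r) (hn : r + 2 ≤ n)
    (s' : Fin r → ℕ) (hs' : ∀ i, 0 < s' i)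
    (hp : p.Prime) (hpn : p ≤ n - r)
    (hpmax : ∀ q : ℕ, q.Prime → q ≤ n - r → q ≤ p)
    (s₁ : ℕ) (hs₁ : 0 < s₁)
    (hM : max (padicValRat p (cval n r s' p))
        (padicValRat p (cval n r s' p) -
          ((Finset.Icc 1 (n - r)).erase p).inf'
            ⟨1, Finset.mem_erase.mpr
              ⟨Nat.ne_of_lt hp.one_lt, Finset.mem_Icc.mpr ⟨le_refl 1, by omega⟩⟩⟩
            (fun k => padicValRat p (cval n r s' k)))
      < (s₁ : ℤ)) :
    padicValRat p (mhs n (r + 1) (Fin.cons s₁ s')) =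
      padicValRat p (cval n r s' p) - (s₁ : ℤ) ∧
    padicValRat p (mhs n (r + 1) (Fin.cons s₁ s')) < 0 ∧
    ¬∃ m : ℤ, mhs n (r + 1) (Fin.cons s₁ s') = (m : ℚ) := by
  haveI : Fact p.Prime := ⟨hp⟩
  set F : ℕ → ℚ := fun k => ((1 : ℚ) / (k : ℚ) ^ s₁) * cval n r s' k with hF
  -- rewrite mhs as a sum over Icc 1 (n - r)
  have hmhs : mhs n (r + 1) (Fin.cons s₁ s') = ∑ k ∈ Finset.Icc 1 (n - r), F k := by
    rw [mhs_decomp n r s₁ s']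
    rw [Fin.sum_univ_eq_sum_range (fun k => ((1 : ℚ) / ((k : ℕ) + 1 : ℚ) ^ s₁) *
      cval n r s' (k + 1))]
    have h1 : ∑ j ∈ Finset.range n, ((1 : ℚ) / ((j : ℚ) + 1) ^ s₁) * cval n r s' (j + 1)
        = ∑ j ∈ Finset.range (n - r), ((1 : ℚ) / ((j : ℚ) + 1) ^ s₁) * cval n r s' (j + 1) := by
      refine (Finset.sum_subset (Finset.range_subset_range.mpr (by omega)) ?_).symm
      intro x hx hnx
      rw [Finset.mem_range] at hx hnx
      rw [cval_eq_zero n r s' (x + 1) hr (by omega), mul_zero]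
    rw [h1]
    refine Finset.sum_nbij' (i := fun j => j + 1) (j := fun k => k - 1) ?_ ?_ ?_ ?_ ?_
    · intro a ha
      rw [Finset.mem_range] at ha
      rw [Finset.mem_Icc]
      omega
    · intro a ha
      rw [Finset.mem_Icc] at ha
      rw [Finset.mem_range]
      omega
    · intro a _; omega
    · intro a ha; rw [Finset.mem_Icc] at ha; omega
    · intro a _
      simp only [hF, Nat.cast_add, Nat.cast_one]
  -- basic setup
  have hnr2 : 2 ≤ n - r := by omega
  have hppos : 0 < p := hp.pos
  have hpIcc : p ∈ Finset.Icc 1 (n - r) := Finset.mem_Icc.mpr ⟨hppos, hpn⟩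
  set S : Finset ℕ := (Finset.Icc 1 (n - r)).erase p with hSdef
  have hSne : S.Nonempty := ⟨1, Finset.mem_erase.mpr
    ⟨Nat.ne_of_lt hp.one_lt, Finset.mem_Icc.mpr ⟨le_refl 1, by omega⟩⟩⟩
  have hcp_pos : 0 < cval n r s' p := cval_pos n r s' p (by omega) hr
  have hFp_pos : 0 < F p := by
    apply mul_pos _ hcp_pos
    have : (0:ℚ) < (p:ℚ) := by exact_mod_cast hppos
    positivity
  have hFp_val : padicValRat p (F p) = padicValRat p (cval n r s' p) - (s₁ : ℤ) := by
    rw [hF]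
    dsimp only
    rw [one_div, padicValRat.mul (inv_ne_zero (pow_ne_zero _
      (Nat.cast_ne_zero.mpr hppos.ne'))) (ne_of_gt hcp_pos), padicValRat.self_pow_inv]
    ring
  -- Bertrand: no multiple of p other than p itself in [1, n-r]
  obtain ⟨q, hq, hpq, hq2⟩ := Nat.exists_prime_lt_and_le_two_mul p hppos.ne'
  have hlt2p : n - r < 2 * p := by
    by_contra hcon
    push_neg at hcon
    exact absurd (hpmax q hq (le_trans hq2 hcon)) (not_le.mpr hpq)
  have hnotdvd : ∀ k ∈ S, ¬ p ∣ k := by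
    intro k hk hdvd
    obtain ⟨hkne, hkIcc⟩ := Finset.mem_erase.mp hk
    rw [Finset.mem_Icc] at hkIcc
    obtain ⟨c, rfl⟩ := hdvd
    have hc0 : c ≠ 0 := by rintro rfl; omega
    have hc2 : c < 2 := by
      by_contra hcge
      push_neg at hcge
      have := Nat.mul_le_mul_left p hcge
      omega
    have : c = 1 := by omega
    subst this
    exact hkne (mul_one p)
  have hck_pos : ∀ k ∈ S, 0 < cval n r s' k := by
    intro k hk
    obtain ⟨_, hkIcc⟩ := Finset.mem_erase.mp hk
    rw [Finset.mem_Icc] at hkIcc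
    exact cval_pos n r s' k (by omega) hr
  have hFk_pos : ∀ k ∈ S, 0 < F k := by
    intro k hk
    obtain ⟨_, hkIcc⟩ := Finset.mem_erase.mp hk
    rw [Finset.mem_Icc] at hkIcc
    apply mul_pos _ (hck_pos k hk)
    have : (0:ℚ) < (k:ℚ) := by exact_mod_cast hkIcc.1
    positivity
  have hFk_val : ∀ k ∈ S, padicValRat p (F k) = padicValRat p (cval n r s' k) := by
    intro k hk
    obtain ⟨_, hkIcc⟩ := Finset.mem_erase.mp hk
    rw [Finset.mem_Icc] at hkIcc
    have hk0 : (k:ℚ) ≠ 0 := Nat.cast_ne_zero.mpr (by omega)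
    rw [hF]
    dsimp only
    rw [one_div, padicValRat.mul (inv_ne_zero (pow_ne_zero _ hk0))
      (ne_of_gt (hck_pos k hk)), padicValRat.inv, padicValRat.pow (k : ℚ),
      padicValRat.of_nat, padicValNat.eq_zero_of_not_dvd (hnotdvd k hk)]
    push_cast
    ring
  obtain ⟨hM1, hM2⟩ := max_lt_iff.mp hM
  have hM2' : padicValRat p (cval n r s' p) -
      S.inf' hSne (fun k => padicValRat p (cval n r s' k)) < (s₁ : ℤ) := hM2
  have hFp_lt : ∀ k ∈ S, padicValRat p (F p) < padicValRat p (F k) := by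
    intro k hk
    rw [hFp_val, hFk_val k hk]
    have h1 : S.inf' hSne (fun k => padicValRat p (cval n r s' k)) ≤
        padicValRat p (cval n r s' k) := Finset.inf'_le _ hk
    omega
  have hrest_pos : 0 < ∑ k ∈ S, F k := Finset.sum_pos hFk_pos hSne
  have hsplit : ∑ k ∈ Finset.Icc 1 (n - r), F k = F p + ∑ k ∈ S, F k :=
    (Finset.add_sum_erase _ F hpIcc).symm
  have hlt_sum : padicValRat p (F p) < padicValRat p (∑ k ∈ S, F k) :=
    lt_padicValRat_sum hSne (F p) hFp_lt hFk_pos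
  have hval : padicValRat p (mhs n (r + 1) (Fin.cons s₁ s')) =
      padicValRat p (cval n r s' p) - (s₁ : ℤ) := by
    rw [hmhs, hsplit, padicValRat.add_eq_of_lt (ne_of_gt (add_pos hFp_pos hrest_pos))
      (ne_of_gt hFp_pos) (ne_of_gt hrest_pos) hlt_sum, hFp_val]
  have hneg : padicValRat p (mhs n (r + 1) (Fin.cons s₁ s')) < 0 := by
    rw [hval]; omega
  refine ⟨hval, hneg, ?_⟩
  rintro ⟨m, hm⟩
  rw [hm, padicValRat.of_int] at hneg
  exact absurd hneg (not_lt.mpr (Int.natCast_nonneg _))
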